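/- Let D be a commutative ring and p ∈ D[X] a monic polynomial of degree n. Then the intersection, over all n×n matrices M over D whose characteristic polynomial equals p, of the null ideals N_{D[X]}(M) is exactly the principal ideal (p(X)) of D[X]. -/

import Mathlib

/-- Let `D` be a commutative ring and `p ∈ D[X]` a monic polynomial of
degree `n`.  The intersection, over all `n × n` matrices `M` over `D` whose characteristic
polynomial equals `p`, of the null ideals `N_{D[X]}(M) = {g ∈ D[X] : g(M) = 0}` is exactly
the principal ideal `(p)` of `D[X]`. -/
theorem stmt_2 (D : Type*) [CommRing D] (n : ℕ) (p : Polynomial D)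
    (hmonic : p.Monic) (hdeg : p.natDegree = n) :
    {g : Polynomial D | ∀ M : Matrix (Fin n) (Fin n) D, M.charpoly = p →
        Polynomial.aeval M g = 0} =
      {g : Polynomial D | g ∈ Ideal.span ({p} : Set (Polynomial D))} := by
  subst hdeg
  ext g
  simp only [Set.mem_setOf_eq, Ideal.mem_span_singleton]
  constructor
  · intro h
    rcases subsingleton_or_nontrivial D with hD | hD
    · exact ⟨0, Subsingleton.elim _ _⟩
    · set pb := AdjoinRoot.powerBasis' hmonic with hpb
      set M : Matrix (Fin p.natDegree) (Fin p.natDegree) D :=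
        Algebra.leftMulMatrix pb.basis pb.gen with hM
      have hroot : Polynomial.aeval pb.gen p = 0 := by
        rw [hpb, AdjoinRoot.powerBasis'_gen, AdjoinRoot.aeval_eq, AdjoinRoot.mk_self]
      have hchar : M.charpoly = p := by
        show (Algebra.leftMulMatrix pb.basis pb.gen).charpoly = p
        rw [charpoly_leftMulMatrix]
        symm
        apply minpoly.unique' D pb.gen hmonic hroot
        intro q hq
        by_contra hc
        push_neg at hc
        obtain ⟨hq0, hq1⟩ := hc
        have hle := pb.dim_le_degree_of_root hq0 hq1
        have hdim : pb.dim = p.natDegree := by rw [hpb, AdjoinRoot.powerBasis'_dim]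
        rw [hdim] at hle
        rw [Polynomial.degree_eq_natDegree hmonic.ne_zero] at hq
        exact absurd (hle.trans_lt hq) (lt_irrefl _)
      have hgM : Polynomial.aeval M g = 0 := h M hchar
      have : Algebra.leftMulMatrix pb.basis (Polynomial.aeval pb.gen g) = 0 := by
        rw [← Polynomial.aeval_algHom_apply]
        exact hgM
      have hg0 : Polynomial.aeval pb.gen g = 0 :=
        (injective_iff_map_eq_zero _).mp (Algebra.leftMulMatrix_injective pb.basis) _ this
      rw [hpb, AdjoinRoot.powerBasis'_gen, AdjoinRoot.aeval_eq, AdjoinRoot.mk_eq_zero] at hg0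
      exact hg0
  · rintro ⟨c, rfl⟩ M hM
    have hc := Matrix.aeval_self_charpoly M
    rw [hM] at hc
    rw [map_mul, hc, zero_mul]
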